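/- There exists a bounded Baire class 1 function f : [0,1] → ℝ with L_f = T if and only if: T is compact, T(x) = {y : (x,y) ∈ T} is nonempty for every x ∈ [0,1], and the set D = {x : T(x) has more than one element} is meager in [0,1]. -/

import Mathlib

open Set Filter Topology Metric

noncomputable section

/-- The graph of `f` restricted to the set `A`, as a subset of `ℝ × ℝ`. -/
def graphOn (A : Set ℝ) (f : ℝ → ℝ) : Set (ℝ × ℝ) :=
  {p : ℝ × ℝ | p.1 ∈ A ∧ p.2 = f p.1}

/-- The set of accumulation points of a set `G ⊆ ℝ × ℝ`. -/
def accPts (G : Set (ℝ × ℝ)) : Set (ℝ × ℝ) :=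
  {p : ℝ × ℝ | AccPt p (𝓟 G)}

/-- Baire class 1 on `[0,1]`: pointwise limit of continuous functions. -/
def Baire1 (f : ℝ → ℝ) : Prop :=
  ∃ g : ℕ → ℝ → ℝ, (∀ n, ContinuousOn (g n) (Icc 0 1)) ∧
    ∀ x ∈ Icc (0:ℝ) 1, Tendsto (fun n => g n x) atTop (𝓝 (f x))

/-- Baire class 2 on `[0,1]`: pointwise limit of Baire class 1 functions. -/
def Baire2 (f : ℝ → ℝ) : Prop :=
  ∃ g : ℕ → ℝ → ℝ, (∀ n, Baire1 (g n)) ∧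
    ∀ x ∈ Icc (0:ℝ) 1, Tendsto (fun n => g n x) atTop (𝓝 (f x))

/-- A set is meager relative to the subspace `[0,1]`. -/
def MeagreIn01 (D : Set ℝ) : Prop :=
  IsMeagre ((↑) ⁻¹' D : Set (Icc (0:ℝ) 1))

/-- Embedding of the plane into `ℝ × ℝ̄` (extended reals in the second coordinate). -/
def embedE (p : ℝ × ℝ) : ℝ × EReal := (p.1, (p.2 : EReal))


/-- `s` is a countable union of closed subsets of `ℝ`. -/
def IsFsig (s : Set ℝ) : Prop :=
  ∃ F : ℕ → Set ℝ, (∀ n, IsClosed (F n)) ∧ s = ⋃ n, F n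

lemma IsClosed.isFsig {s : Set ℝ} (hs : IsClosed s) : IsFsig s :=
  ⟨fun _ => s, fun _ => hs, by simp [iUnion_const]⟩

lemma isFsig_empty : IsFsig (∅ : Set ℝ) := isClosed_empty.isFsig

lemma IsOpen.isFsig {U : Set ℝ} (hU : IsOpen U) : IsFsig U := by
  refine ⟨fun n => {x | ∀ y, y ∉ U → 1/(n+1) ≤ |x - y|}, fun n => ?_, ?_⟩
  · have h : {x : ℝ | ∀ y, y ∉ U → 1/(n+1) ≤ |x - y|} = ⋂ (y) (_ : y ∉ U), {x | 1/(n+1) ≤ |x - y|} := by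
      ext x; simp only [mem_iInter, mem_setOf_eq]
    show IsClosed {x : ℝ | ∀ y, y ∉ U → 1/(n+1) ≤ |x - y|}
    rw [h]
    exact isClosed_iInter fun y => isClosed_iInter fun _ =>
      isClosed_le continuous_const (continuous_id.sub continuous_const).abs
  · ext x
    simp only [mem_iUnion, mem_setOf_eq]
    constructor
    · rintro hx
      obtain ⟨ε, hε, hball⟩ := Metric.isOpen_iff.1 hU x hx
      obtain ⟨n, hn⟩ := exists_nat_one_div_lt hε
      refine ⟨n, fun y hy => ?_⟩
      by_contra h
      push_neg at h
      exact hy (hball (by rw [Metric.mem_ball, Real.dist_eq, abs_sub_comm]; linarith))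
    · rintro ⟨n, hx⟩
      by_contra h
      have := hx x h
      simp only [sub_self, abs_zero] at this
      have : (0:ℝ) < 1/(n+1) := by positivity
      linarith [hx x h, this]

lemma IsFsig.union {s t : Set ℝ} (hs : IsFsig s) (ht : IsFsig t) : IsFsig (s ∪ t) := by
  obtain ⟨F, hF, rfl⟩ := hs; obtain ⟨G, hG, rfl⟩ := ht
  refine ⟨fun n => F n ∪ G n, fun n => (hF n).union (hG n), ?_⟩
  ext x
  simp only [mem_union, mem_iUnion]
  constructor
  · rintro (⟨i, hi⟩ | ⟨i, hi⟩) <;> exact ⟨i, by tauto⟩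
  · rintro ⟨i, hi | hi⟩
    · exact Or.inl ⟨i, hi⟩
    · exact Or.inr ⟨i, hi⟩

lemma IsFsig.inter {s t : Set ℝ} (hs : IsFsig s) (ht : IsFsig t) : IsFsig (s ∩ t) := by
  obtain ⟨F, hF, rfl⟩ := hs; obtain ⟨G, hG, rfl⟩ := ht
  refine ⟨fun n => F ((Denumerable.eqv (ℕ × ℕ)).symm n).1 ∩ G ((Denumerable.eqv (ℕ × ℕ)).symm n).2,
    fun n => (hF _).inter (hG _), ?_⟩
  ext x
  simp only [mem_inter_iff, mem_iUnion]
  constructor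
  · rintro ⟨⟨i, hi⟩, ⟨j, hj⟩⟩
    exact ⟨(Denumerable.eqv (ℕ × ℕ)) (i, j), by simp [hi, hj]⟩
  · rintro ⟨n, h1, h2⟩
    exact ⟨⟨_, h1⟩, ⟨_, h2⟩⟩

lemma isFsig_iUnion {f : ℕ → Set ℝ} (hf : ∀ n, IsFsig (f n)) : IsFsig (⋃ n, f n) := by
  choose F hF hFeq using hf
  refine ⟨fun n => F ((Denumerable.eqv (ℕ × ℕ)).symm n).1 ((Denumerable.eqv (ℕ × ℕ)).symm n).2,
    fun n => hF _ _, ?_⟩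
  ext x
  simp only [mem_iUnion]
  constructor
  · rintro ⟨i, hi⟩
    rw [hFeq i] at hi
    obtain ⟨j, hj⟩ := mem_iUnion.1 hi
    exact ⟨(Denumerable.eqv (ℕ × ℕ)) (i, j), by simp [hj]⟩
  · rintro ⟨n, hn⟩
    exact ⟨_, (hFeq _).symm ▸ mem_iUnion.2 ⟨_, hn⟩⟩

lemma Set.Countable.isFsig {s : Set ℝ} (hs : s.Countable) : IsFsig s := by
  rcases s.eq_empty_or_nonempty with rfl | hne
  · exact isFsig_empty
  · obtain ⟨f, rfl⟩ := hs.exists_eq_range hne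
    exact ⟨fun n => {f n}, fun n => isClosed_singleton, by ext x; simp [eq_comm]⟩

/-- A set of the form Fσ ∖ closed (in particular locally closed) is Fσ. -/
lemma IsFsig.diff_closed {s : Set ℝ} (hs : IsFsig s) {t : Set ℝ} (ht : IsClosed t) :
    IsFsig (s \ t) := hs.inter ht.isOpen_compl.isFsig

lemma near_point {c : ℝ} (hc : c ∈ Icc (0:ℝ) 1) {ε : ℝ} (hε : 0 < ε) :
    ∃ x ∈ Icc (0:ℝ) 1, x ≠ c ∧ |x - c| < ε := by
  rcases lt_or_ge c 1 with h | h
  · refine ⟨c + min ε (1 - c) / 2, ⟨?_, ?_⟩, ?_, ?_⟩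
    · have : 0 < min ε (1 - c) := lt_min hε (by linarith)
      linarith [hc.1]
    · have : min ε (1 - c) ≤ 1 - c := min_le_right _ _
      linarith
    · have : 0 < min ε (1 - c) := lt_min hε (by linarith)
      intro hh; nlinarith
    · have h1 : min ε (1 - c) ≤ ε := min_le_left _ _
      have : 0 < min ε (1 - c) := lt_min hε (by linarith)
      rw [add_sub_cancel_left, abs_of_pos (by linarith)]
      linarith
  · refine ⟨c - min ε 1 / 2, ⟨?_, ?_⟩, ?_, ?_⟩
    · have : min ε 1 ≤ 1 := min_le_right _ _
      linarith
    · have : 0 < min ε 1 := lt_min hε one_pos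
      linarith [hc.2]
    · have : 0 < min ε 1 := lt_min hε one_pos
      intro hh; nlinarith
    · have h1 : min ε 1 ≤ ε := min_le_left _ _
      have : 0 < min ε 1 := lt_min hε one_pos
      rw [show c - min ε 1 / 2 - c = -(min ε 1 / 2) by ring, abs_neg, abs_of_pos (by linarith)]
      linarith

instance : CompleteSpace (Icc (0:ℝ) 1) := isClosed_Icc.completeSpace_coe

lemma isMeagre_coe_singleton (c : ℝ) :
    IsMeagre ((↑) ⁻¹' {c} : Set (Icc (0:ℝ) 1)) := by
  rw [isMeagre_iff_countable_union_isNowhereDense]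
  refine ⟨{((↑) ⁻¹' {c} : Set (Icc (0:ℝ) 1))}, ?_, countable_singleton _, by simp⟩
  rintro t rfl'
  simp only [mem_singleton_iff] at rfl'
  subst rfl'
  have hcl : IsClosed ((↑) ⁻¹' {c} : Set (Icc (0:ℝ) 1)) :=
    isClosed_singleton.preimage continuous_subtype_val
  rw [hcl.isNowhereDense_iff]
  by_contra h
  obtain ⟨x, hx⟩ := nonempty_iff_ne_empty.2 h
  obtain ⟨ε, hε, hball⟩ := Metric.isOpen_iff.1 isOpen_interior x hx
  have hxc : (x : ℝ) = c := by have := interior_subset hx; simpa using this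
  obtain ⟨y, hy, hyne, hyc⟩ := near_point (hxc ▸ x.2) hε
  have : (⟨y, hy⟩ : Icc (0:ℝ) 1) ∈ interior ((↑) ⁻¹' {c} : Set (Icc (0:ℝ) 1)) := by
    apply hball
    rw [Metric.mem_ball, Subtype.dist_eq, Real.dist_eq]
    simpa [hxc] using hyc
  exact hyne (by simpa using interior_subset this)

lemma isMeagre_coe_countable {C : Set ℝ} (hC : C.Countable) :
    IsMeagre ((↑) ⁻¹' C : Set (Icc (0:ℝ) 1)) := by
  rcases C.eq_empty_or_nonempty with rfl | hne
  · simpa [preimage_empty] using (isMeagre_coe_singleton 2).mono (by simp)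
  · obtain ⟨f, rfl⟩ := hC.exists_eq_range hne
    have : ((↑) ⁻¹' range f : Set (Icc (0:ℝ) 1)) = ⋃ n, ((↑) ⁻¹' {f n}) := by
      ext x; simp [mem_iUnion, eq_comm]
    rw [this]
    exact isMeagre_iUnion fun n => isMeagre_coe_singleton _

lemma pick_point {a : ℝ} (ha : a ∈ Icc (0:ℝ) 1) {ε : ℝ} (hε : 0 < ε) {C : Set ℝ}
    (hC : IsMeagre ((↑) ⁻¹' C : Set (Icc (0:ℝ) 1))) :
    ∃ x, x ∈ Icc (0:ℝ) 1 ∧ x ∉ C ∧ x ≠ a ∧ |x - a| < ε := by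
  have hd : Dense (((↑) ⁻¹' C : Set (Icc (0:ℝ) 1))ᶜ) := dense_of_mem_residual hC
  set U : Set (Icc (0:ℝ) 1) := (↑) ⁻¹' {x : ℝ | x ≠ a ∧ |x - a| < ε} with hUdef
  have hU : IsOpen U := by
    apply IsOpen.preimage continuous_subtype_val
    exact isOpen_ne.inter (isOpen_lt (continuous_id.sub continuous_const).abs continuous_const)
  have hne : U.Nonempty := by
    obtain ⟨y, hy, h1, h2⟩ := near_point ha hε
    exact ⟨⟨y, hy⟩, h1, h2⟩
  obtain ⟨x, hxU, hxC⟩ := hd.inter_open_nonempty U hU hne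
  exact ⟨(x : ℝ), x.2, hxC, hxU.1, hxU.2⟩

lemma seq_approach {a : ℝ} (ha : a ∈ Icc (0:ℝ) 1) {C : Set ℝ}
    (hC : IsMeagre ((↑) ⁻¹' C : Set (Icc (0:ℝ) 1))) :
    ∃ u : ℕ → ℝ, (∀ n, u n ∈ Icc (0:ℝ) 1 ∧ u n ∉ C ∧ u n ≠ a) ∧ Tendsto u atTop (𝓝 a) := by
  have h : ∀ n : ℕ, ∃ x, x ∈ Icc (0:ℝ) 1 ∧ x ∉ C ∧ x ≠ a ∧ |x - a| < 1/(n+1) :=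
    fun n => pick_point ha (by positivity) hC
  choose u hu1 hu2 hu3 hu4 using h
  refine ⟨u, fun n => ⟨hu1 n, hu2 n, hu3 n⟩, ?_⟩
  rw [tendsto_iff_dist_tendsto_zero]
  exact squeeze_zero (fun n => dist_nonneg)
    (fun n => by rw [Real.dist_eq]; exact (hu4 n).le) tendsto_one_div_add_atTop_nhds_zero_nat
lemma Baire1.sub {f g : ℝ → ℝ} (hf : Baire1 f) (hg : Baire1 g) :
    Baire1 (fun x => f x - g x) := by
  obtain ⟨u, hu, hut⟩ := hf; obtain ⟨v, hv, hvt⟩ := hg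
  exact ⟨fun n x => u n x - v n x, fun n => (hu n).sub (hv n),
    fun x hx => (hut x hx).sub (hvt x hx)⟩

lemma baire1_finset_sum {ι : Type*} (s : Finset ι) (f : ι → ℝ → ℝ)
    (hf : ∀ i ∈ s, Baire1 (f i)) : Baire1 (fun x => ∑ i ∈ s, f i x) := by
  choose! g hg hgt using hf
  refine ⟨fun n x => ∑ i ∈ s, g i n x,
    fun n => continuousOn_finset_sum s (fun i hi => hg i hi n), fun x hx => ?_⟩
  exact tendsto_finset_sum s (fun i hi => hgt i hi x hx)

open scoped Classical in
/-- Indicator (times a constant) of a set that is Fσ with Fσ relative complement is Baire-1. -/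
lemma baire1_indicator {A : Set ℝ} (c : ℝ) (h1 : IsFsig A) (h2 : IsFsig (Icc 0 1 \ A))
    (hsub : A ⊆ Icc 0 1) : Baire1 (A.indicator (fun _ => c)) := by
  obtain ⟨F, hFc, hFeq⟩ := h1
  obtain ⟨G, hGc, hGeq⟩ := h2
  set F' : ℕ → Set ℝ := fun n => (⋃ i ∈ Finset.range (n+1), F i) ∪ {2} with hF'
  set G' : ℕ → Set ℝ := fun n => (⋃ i ∈ Finset.range (n+1), G i) ∪ {-2} with hG'
  have hF'c : ∀ n, IsClosed (F' n) :=
    fun n => (isClosed_biUnion_finset fun i _ => hFc i).union isClosed_singleton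
  have hG'c : ∀ n, IsClosed (G' n) :=
    fun n => (isClosed_biUnion_finset fun i _ => hGc i).union isClosed_singleton
  have hF'ne : ∀ n, (F' n).Nonempty := fun n => ⟨2, Or.inr rfl⟩
  have hG'ne : ∀ n, (G' n).Nonempty := fun n => ⟨-2, Or.inr rfl⟩
  have hFA : ∀ i, F i ⊆ A := fun i => hFeq ▸ subset_iUnion F i
  have hGA : ∀ i, G i ⊆ Icc 0 1 \ A := fun i => hGeq ▸ subset_iUnion G i
  have hdisj : ∀ n, ∀ x, x ∈ F' n → x ∈ G' n → False := by
    rintro n x (hx | hx) (hy | hy)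
    · simp only [mem_iUnion] at hx hy
      obtain ⟨i, _, hi⟩ := hx; obtain ⟨j, _, hj⟩ := hy
      exact (hGA j hj).2 (hFA i hi)
    · simp only [mem_singleton_iff] at hy; subst hy
      simp only [mem_iUnion] at hx
      obtain ⟨i, _, hi⟩ := hx
      have := (hsub (hFA i hi)).1; norm_num at this
    · simp only [mem_singleton_iff] at hx; subst hx
      simp only [mem_iUnion] at hy
      obtain ⟨j, _, hj⟩ := hy
      have := ((hGA j hj).1).2; norm_num at this
    · simp only [mem_singleton_iff] at hx hy; rw [hx] at hy; norm_num at hy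
  have hpos : ∀ n x, 0 < infDist x (F' n) + infDist x (G' n) := by
    intro n x
    rcases (infDist_nonneg (s := F' n) (x := x)).lt_or_eq with h | h
    · linarith [infDist_nonneg (s := G' n) (x := x)]
    rcases (infDist_nonneg (s := G' n) (x := x)).lt_or_eq with h' | h'
    · linarith
    exfalso
    exact hdisj n x (((hF'c n).mem_iff_infDist_zero (hF'ne n)).2 h.symm)
      (((hG'c n).mem_iff_infDist_zero (hG'ne n)).2 h'.symm)
  set u : ℕ → ℝ → ℝ := fun n x => c * infDist x (G' n) / (infDist x (F' n) + infDist x (G' n))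
    with hu
  have hucont : ∀ n, Continuous (u n) := by
    intro n
    exact (continuous_const.mul (continuous_infDist_pt _)).div
      ((continuous_infDist_pt _).add (continuous_infDist_pt _)) (fun x => (hpos n x).ne')
  have huF : ∀ n x, x ∈ F' n → u n x = c := by
    intro n x hx
    have h0 : infDist x (F' n) = 0 := ((hF'c n).mem_iff_infDist_zero (hF'ne n)).1 hx
    have h1 : infDist x (G' n) ≠ 0 := by
      intro h
      exact hdisj n x hx (((hG'c n).mem_iff_infDist_zero (hG'ne n)).2 h)
    rw [hu]; simp only [h0, zero_add]; exact mul_div_cancel_right₀ c h1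
  have huG : ∀ n x, x ∈ G' n → u n x = 0 := by
    intro n x hx
    have h0 : infDist x (G' n) = 0 := ((hG'c n).mem_iff_infDist_zero (hG'ne n)).1 hx
    rw [hu]; simp [h0]
  refine ⟨u, fun n => (hucont n).continuousOn, fun x hx => ?_⟩
  by_cases hxA : x ∈ A
  · rw [Set.indicator_of_mem hxA]
    obtain ⟨i, hi⟩ := mem_iUnion.1 (hFeq ▸ hxA)
    apply tendsto_atTop_of_eventually_const (i₀ := i)
    intro n hn
    exact huF n x (Or.inl (mem_iUnion.2 ⟨i, mem_iUnion.2 ⟨Finset.mem_range.2 (by omega), hi⟩⟩))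
  · rw [Set.indicator_of_notMem hxA]
    have hxG : x ∈ ⋃ n, G n := hGeq ▸ ⟨hx, hxA⟩
    obtain ⟨i, hi⟩ := mem_iUnion.1 hxG
    apply tendsto_atTop_of_eventually_const (i₀ := i)
    intro n hn
    exact huG n x (Or.inl (mem_iUnion.2 ⟨i, mem_iUnion.2 ⟨Finset.mem_range.2 (by omega), hi⟩⟩))

lemma geom_tail_le (K n : ℕ) : ∑ k ∈ Finset.Ico K n, ((1:ℝ)/2)^k ≤ 2 * (1/2)^K := by
  rw [Finset.sum_Ico_eq_sum_range]
  have : ∀ k, ((1:ℝ)/2)^(K + k) = (1/2)^K * (1/2)^k := fun k => pow_add _ _ _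
  simp_rw [this, ← Finset.mul_sum]
  rw [mul_comm]
  apply mul_le_mul_of_nonneg_right (sum_geometric_two_le _) (by positivity)

lemma baire1_of_uniform_approx {f : ℝ → ℝ}
    (h : ∀ δ : ℝ, 0 < δ → ∃ g, Baire1 g ∧ ∀ x ∈ Icc (0:ℝ) 1, |g x - f x| ≤ δ) :
    Baire1 f := by
  have h2 : ∀ k : ℕ, ∃ g, Baire1 g ∧ ∀ x ∈ Icc (0:ℝ) 1, |g x - f x| ≤ (1/2)^k :=
    fun k => h _ (by positivity)
  choose v hv hvf using h2
  -- differences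
  set d : ℕ → ℝ → ℝ := fun k x => v (k+1) x - v k x with hd
  have hdb : ∀ k, ∀ x ∈ Icc (0:ℝ) 1, |d k x| ≤ 2 * (1/2)^k := by
    intro k x hx
    have h1 := hvf (k+1) x hx
    have h2 := hvf k x hx
    have : (1/2:ℝ)^(k+1) ≤ (1/2)^k := by
      apply pow_le_pow_of_le_one (by norm_num) (by norm_num) (by omega)
    calc |d k x| = |(v (k+1) x - f x) - (v k x - f x)| := by rw [hd]; ring_nf
    _ ≤ |v (k+1) x - f x| + |v k x - f x| := abs_sub _ _
    _ ≤ 2 * (1/2)^k := by linarith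
  have hdB1 : ∀ k, Baire1 (d k) := fun k => (hv (k+1)).sub (hv k)
  obtain ⟨g0, hg0c, hg0t⟩ := hv 0
  have hw : ∀ k, ∃ w : ℕ → ℝ → ℝ, (∀ n, ContinuousOn (w n) (Icc 0 1)) ∧
      ∀ x ∈ Icc (0:ℝ) 1, Tendsto (fun n => w n x) atTop (𝓝 (d k x)) := fun k => hdB1 k
  choose w hwc hwt using hw
  -- clamped versions
  set β : ℕ → ℝ := fun k => 2 * (1/2)^k with hβ
  have hβpos : ∀ k, 0 < β k := fun k => by positivity
  set wc : ℕ → ℕ → ℝ → ℝ := fun k n x => max (-(β k)) (min (β k) (w k n x)) with hwc'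
  have hwcc : ∀ k n, ContinuousOn (wc k n) (Icc 0 1) := by
    intro k n
    have hcl : Continuous (fun y : ℝ => max (-(β k)) (min (β k) y)) :=
      continuous_const.max (continuous_const.min continuous_id)
    exact hcl.comp_continuousOn (hwc k n)
  have hwcb : ∀ k n x, |wc k n x| ≤ β k := by
    intro k n x
    rw [abs_le]
    constructor
    · exact le_max_left _ _
    · exact max_le (by linarith [hβpos k]) (min_le_left _ _)
  have hwct : ∀ k, ∀ x ∈ Icc (0:ℝ) 1, Tendsto (fun n => wc k n x) atTop (𝓝 (d k x)) := by
    intro k x hx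
    have : d k x = max (-(β k)) (min (β k) (d k x)) := by
      have h1 := hdb k x hx
      rw [abs_le] at h1
      rw [min_eq_right h1.2, max_eq_right h1.1]
    rw [this]
    exact Tendsto.max tendsto_const_nhds (Tendsto.min tendsto_const_nhds (hwt k x hx))
  -- the approximating sequence
  set G : ℕ → ℝ → ℝ := fun n x => g0 n x + ∑ k ∈ Finset.range n, wc k n x with hG
  have hGc : ∀ n, ContinuousOn (G n) (Icc 0 1) := by
    intro n
    exact (hg0c n).add (continuousOn_finset_sum _ (fun k _ => hwcc k n))
  refine ⟨G, hGc, fun x hx => ?_⟩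
  -- telescoping: v K x = v 0 x + ∑_{k<K} d k x
  have htel : ∀ K, ∑ k ∈ Finset.range K, d k x = v K x - v 0 x := by
    intro K
    exact Finset.sum_range_sub (fun k => v k x) K
  rw [Metric.tendsto_atTop]
  intro ε hε
  obtain ⟨K, hK⟩ := exists_pow_lt_of_lt_one (show (0:ℝ) < ε/8 by linarith) (show (1/2:ℝ) < 1 by norm_num)
  -- A n := |g0 n x - v 0 x| + ∑_{k<K} |wc k n x - d k x| tendsto 0
  have hA : Tendsto (fun n => |g0 n x - v 0 x| + ∑ k ∈ Finset.range K, |wc k n x - d k x|)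
      atTop (𝓝 0) := by
    have t1 : Tendsto (fun n => |g0 n x - v 0 x|) atTop (𝓝 0) := by
      have := (hg0t x hx).sub (tendsto_const_nhds (x := v 0 x))
      rw [sub_self] at this
      simpa using this.abs
    have t2 : Tendsto (fun n => ∑ k ∈ Finset.range K, |wc k n x - d k x|) atTop (𝓝 0) := by
      have : Tendsto (fun n => ∑ k ∈ Finset.range K, |wc k n x - d k x|) atTop
          (𝓝 (∑ k ∈ Finset.range K, 0)) := by
        apply tendsto_finset_sum
        intro k _
        have := ((hwct k x hx).sub (tendsto_const_nhds (x := d k x)))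
        rw [sub_self] at this
        simpa using this.abs
      simpa using this
    simpa using t1.add t2
  rw [Metric.tendsto_atTop] at hA
  obtain ⟨N, hN⟩ := hA ((1/2)^K) (by positivity)
  refine ⟨max N K, fun n hn => ?_⟩
  have hnN : n ≥ N := le_trans (le_max_left _ _) hn
  have hnK : n ≥ K := le_trans (le_max_right _ _) hn
  have hAn := hN n hnN
  rw [Real.dist_0_eq_abs] at hAn
  have hAn' : |g0 n x - v 0 x| + ∑ k ∈ Finset.range K, |wc k n x - d k x| < (1/2)^K := by
    have : |(|g0 n x - v 0 x| + ∑ k ∈ Finset.range K, |wc k n x - d k x|)| =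
        |g0 n x - v 0 x| + ∑ k ∈ Finset.range K, |wc k n x - d k x| := by
      apply abs_of_nonneg
      positivity
    linarith [this ▸ hAn]
  -- main estimate
  have hsplit : ∑ k ∈ Finset.range n, wc k n x =
      ∑ k ∈ Finset.range K, wc k n x + ∑ k ∈ Finset.Ico K n, wc k n x := by
    simp only [Finset.range_eq_Ico]
    exact (Finset.sum_Ico_consecutive _ (Nat.zero_le K) hnK).symm
  have hIco : |∑ k ∈ Finset.Ico K n, wc k n x| ≤ 4 * (1/2)^K := by
    calc |∑ k ∈ Finset.Ico K n, wc k n x| ≤ ∑ k ∈ Finset.Ico K n, |wc k n x| :=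
      Finset.abs_sum_le_sum_abs _ _
    _ ≤ ∑ k ∈ Finset.Ico K n, β k := Finset.sum_le_sum (fun k _ => hwcb k n x)
    _ = 2 * ∑ k ∈ Finset.Ico K n, ((1:ℝ)/2)^k := by rw [Finset.mul_sum]
    _ ≤ 2 * (2 * (1/2)^K) := by linarith [geom_tail_le K n]
    _ = 4 * (1/2)^K := by ring
  have hvK : |v K x - f x| ≤ (1/2)^K := hvf K x hx
  have hdecomp : G n x - f x = (g0 n x - v 0 x) + (∑ k ∈ Finset.range K, (wc k n x - d k x))
      + (∑ k ∈ Finset.Ico K n, wc k n x) + (v K x - f x) := by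
    rw [hG]
    simp only
    rw [hsplit, Finset.sum_sub_distrib, htel]
    ring
  rw [Real.dist_eq, hdecomp]
  have h1 : |∑ k ∈ Finset.range K, (wc k n x - d k x)| ≤
      ∑ k ∈ Finset.range K, |wc k n x - d k x| := Finset.abs_sum_le_sum_abs _ _
  have habs : |(g0 n x - v 0 x) + (∑ k ∈ Finset.range K, (wc k n x - d k x))
      + (∑ k ∈ Finset.Ico K n, wc k n x) + (v K x - f x)| ≤
      |g0 n x - v 0 x| + |∑ k ∈ Finset.range K, (wc k n x - d k x)|
      + |∑ k ∈ Finset.Ico K n, wc k n x| + |v K x - f x| := by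
    calc _ ≤ |(g0 n x - v 0 x) + (∑ k ∈ Finset.range K, (wc k n x - d k x))
        + (∑ k ∈ Finset.Ico K n, wc k n x)| + |v K x - f x| := abs_add_le _ _
    _ ≤ |(g0 n x - v 0 x) + (∑ k ∈ Finset.range K, (wc k n x - d k x))|
        + |∑ k ∈ Finset.Ico K n, wc k n x| + |v K x - f x| := by
          linarith [abs_add_le ((g0 n x - v 0 x) + (∑ k ∈ Finset.range K, (wc k n x - d k x)))
            (∑ k ∈ Finset.Ico K n, wc k n x)]
    _ ≤ _ := by
          linarith [abs_add_le (g0 n x - v 0 x) (∑ k ∈ Finset.range K, (wc k n x - d k x))]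
  calc |(g0 n x - v 0 x) + (∑ k ∈ Finset.range K, (wc k n x - d k x))
      + (∑ k ∈ Finset.Ico K n, wc k n x) + (v K x - f x)| ≤ _ := habs
  _ ≤ (1/2)^K + 4 * (1/2)^K + (1/2)^K + (1/2)^K := by
      have hs := Finset.sum_nonneg (fun k (_ : k ∈ Finset.range K) => abs_nonneg (wc k n x - d k x))
      linarith [hAn', hIco, hvK, h1, abs_nonneg (g0 n x - v 0 x)]
  _ = 7 * (1/2)^K := by ring
  _ < ε := by linarith [hK]

lemma isFsig_biUnion {s : Finset ℕ} {f : ℕ → Set ℝ} (h : ∀ i ∈ s, IsFsig (f i)) :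
    IsFsig (⋃ i ∈ s, f i) := by
  classical
  induction s using Finset.induction_on with
  | empty => simpa using isFsig_empty
  | @insert a s' ha ih =>
    rw [Finset.set_biUnion_insert]
    exact (h a (Finset.mem_insert_self a s')).union
      (ih fun i hi => h i (Finset.mem_insert_of_mem hi))

/-- Lebesgue–Hausdorff: a bounded function on `[0,1]` whose preimages of open intervals
are (absolutely) Fσ subsets of `[0,1]` is of Baire class one. -/
lemma baire1_of_fsig_preimages {f : ℝ → ℝ} {M : ℝ}
    (hM : ∀ x ∈ Icc (0:ℝ) 1, |f x| ≤ M)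
    (hpre : ∀ p q : ℝ, IsFsig (f ⁻¹' (Ioo p q) ∩ Icc 0 1)) : Baire1 f := by
  have hM0 : 0 ≤ M := le_trans (abs_nonneg _) (hM 0 (by norm_num))
  apply baire1_of_uniform_approx
  intro δ hδ
  classical
  set J : ℕ := ⌈2*M/δ⌉₊ with hJ
  set c : ℕ → ℝ := fun j => -M + j*δ with hc
  set E : ℕ → Set ℝ := fun j => f ⁻¹' (Ioo (c j - δ) (c j + δ)) ∩ Icc 0 1 with hE
  have hEfsig : ∀ j, IsFsig (E j) := fun j => hpre _ _
  have hEIcc : ∀ j, E j ⊆ Icc 0 1 := fun j => inter_subset_right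
  have hEf : ∀ j, ∀ x ∈ E j, |f x - c j| < δ := by
    rintro j x ⟨hx1, _⟩
    rw [abs_lt]
    exact ⟨by linarith [hx1.1], by linarith [hx1.2]⟩
  -- covering by the E j
  have hcov : ∀ x ∈ Icc (0:ℝ) 1, ∃ j ≤ J, x ∈ E j := by
    intro x hx
    have hyM := abs_le.1 (hM x hx)
    have ht0 : 0 ≤ (f x + M)/δ := div_nonneg (by linarith [hyM.1]) hδ.le
    set j := ⌊(f x + M)/δ⌋₊ with hj
    have h1 : (j:ℝ) ≤ (f x + M)/δ := Nat.floor_le ht0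
    have h2 : (f x + M)/δ < j + 1 := Nat.lt_floor_add_one _
    have hl : (j:ℝ)*δ ≤ f x + M := by
      have := mul_le_mul_of_nonneg_right h1 hδ.le
      rwa [div_mul_cancel₀ _ hδ.ne'] at this
    have hr : f x + M < ((j:ℝ)+1)*δ := by
      have := mul_lt_mul_of_pos_right h2 hδ
      rwa [div_mul_cancel₀ _ hδ.ne'] at this
    refine ⟨j, ?_, ⟨?_, ?_⟩, hx⟩
    · have hle : ((j:ℕ):ℝ) ≤ 2*M/δ := le_trans h1 ((div_le_div_iff_of_pos_right hδ).2 (by linarith [hyM.2]))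
      have := le_trans hle (Nat.le_ceil (2*M/δ))
      exact_mod_cast Nat.cast_le.1 this
    · show c j - δ < f x
      rw [hc]; simp only
      nlinarith [hl]
    · show f x < c j + δ
      rw [hc]; simp only
      nlinarith [hr]
  -- reduction to disjoint pieces
  choose Fm hFmc hFmeq using hEfsig
  set prev : ℕ → ℕ → Set ℝ := fun j i =>
    (⋃ i' ∈ Finset.range i, ⋃ j' ∈ Finset.range (J+1), Fm j' i') ∪
      (⋃ j' ∈ Finset.range j, Fm j' i) with hprev
  have hprevc : ∀ j i, IsClosed (prev j i) := by
    intro j i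
    exact ((isClosed_biUnion_finset fun i' _ =>
      isClosed_biUnion_finset fun j' _ => hFmc j' i')).union
      (isClosed_biUnion_finset fun j' _ => hFmc j' i)
  set K : ℕ → ℕ → Set ℝ := fun j i => Fm j i \ prev j i with hKdef
  set H : ℕ → Set ℝ := fun j => ⋃ i, K j i with hH
  have hHE : ∀ j, H j ⊆ E j := by
    intro j
    apply iUnion_subset
    intro i
    exact diff_subset.trans (by rw [hFmeq j]; exact subset_iUnion (Fm j) i)
  have hHfsig : ∀ j, IsFsig (H j) :=
    fun j => isFsig_iUnion fun i => (hFmc j i).isFsig.diff_closed (hprevc j i)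
  -- disjointness
  have hdisj : ∀ j j' : ℕ, j ≤ J → j' ≤ J → j ≠ j' → ∀ x, x ∈ H j → x ∈ H j' → False := by
    intro j j' hjJ hj'J hne x hx hx'
    obtain ⟨i, hxi⟩ := mem_iUnion.1 hx
    obtain ⟨i', hxi'⟩ := mem_iUnion.1 hx'
    rcases lt_trichotomy i i' with h | h | h
    · apply hxi'.2
      left
      exact mem_biUnion (Finset.mem_range.2 h)
        (mem_biUnion (Finset.mem_range.2 (by omega)) hxi.1)
    · subst h
      rcases lt_or_gt_of_ne hne with hlt | hgt
      · exact hxi'.2 (Or.inr (mem_biUnion (Finset.mem_range.2 hlt) hxi.1))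
      · exact hxi.2 (Or.inr (mem_biUnion (Finset.mem_range.2 hgt) hxi'.1))
    · apply hxi.2
      left
      exact mem_biUnion (Finset.mem_range.2 h)
        (mem_biUnion (Finset.mem_range.2 (by omega)) hxi'.1)
  -- covering by the H j
  have hcovH : ∀ x ∈ Icc (0:ℝ) 1, ∃ j ≤ J, x ∈ H j := by
    intro x hx
    obtain ⟨j₀, hj₀J, hj₀⟩ := hcov x hx
    have hP : ∃ i, ∃ j, j ≤ J ∧ x ∈ Fm j i := by
      rw [hFmeq j₀] at hj₀
      obtain ⟨i, hi⟩ := mem_iUnion.1 hj₀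
      exact ⟨i, j₀, hj₀J, hi⟩
    obtain ⟨j₁', hj₁'J, hj₁'⟩ := Nat.find_spec hP
    have hQ : ∃ j, x ∈ Fm j (Nat.find hP) := ⟨j₁', hj₁'⟩
    have hj₁ : x ∈ Fm (Nat.find hQ) (Nat.find hP) := Nat.find_spec hQ
    have hj₁J : Nat.find hQ ≤ J := le_trans (Nat.find_le hj₁') hj₁'J
    refine ⟨Nat.find hQ, hj₁J, mem_iUnion.2 ⟨Nat.find hP, hj₁, ?_⟩⟩
    rintro (hmem | hmem)
    · simp only [mem_iUnion, Finset.mem_range, exists_prop] at hmem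
      obtain ⟨i', hi', j', hj', hmem⟩ := hmem
      exact Nat.find_min hP hi' ⟨j', by omega, hmem⟩
    · simp only [mem_iUnion, Finset.mem_range, exists_prop] at hmem
      obtain ⟨j', hj', hmem⟩ := hmem
      exact Nat.find_min hQ hj' hmem
  -- complement of H j within [0,1]
  have hHcompl : ∀ j ≤ J, Icc (0:ℝ) 1 \ H j = ⋃ j' ∈ (Finset.range (J+1)).erase j, H j' := by
    intro j hjJ
    apply Subset.antisymm
    · rintro x ⟨hx1, hx2⟩
      obtain ⟨j'', hj''J, hj''⟩ := hcovH x hx1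
      have : j'' ≠ j := by rintro rfl; exact hx2 hj''
      exact mem_biUnion (Finset.mem_erase.2 ⟨this, Finset.mem_range.2 (by omega)⟩) hj''
    · intro x hx
      simp only [mem_iUnion, Finset.mem_erase, Finset.mem_range, exists_prop] at hx
      obtain ⟨j', ⟨hne, hj'⟩, hmem⟩ := hx
      refine ⟨hEIcc j' (hHE j' hmem), fun hmem' => ?_⟩
      exact hdisj j j' hjJ (by omega) (Ne.symm hne) x hmem' hmem
  -- the approximating function
  refine ⟨fun x => ∑ j ∈ Finset.range (J+1), (H j).indicator (fun _ => c j) x, ?_, ?_⟩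
  · apply baire1_finset_sum
    intro j hj
    apply baire1_indicator (c j) (hHfsig j)
    · rw [hHcompl j (by simpa [Nat.lt_succ_iff] using hj)]
      apply isFsig_biUnion
      intro j' _
      exact hHfsig j'
    · exact (hHE j).trans (hEIcc j)
  · intro x hx
    obtain ⟨j₀, hj₀J, hj₀⟩ := hcovH x hx
    have hsum : ∑ j ∈ Finset.range (J+1), (H j).indicator (fun _ => c j) x = c j₀ := by
      rw [Finset.sum_eq_single j₀]
      · exact indicator_of_mem hj₀ _
      · intro j hj hne
        apply indicator_of_notMem
        intro hmem
        exact hdisj j j₀ (by simpa [Nat.lt_succ_iff] using hj) hj₀J hne x hmem hj₀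
      · intro h
        exact absurd (Finset.mem_range.2 (by omega)) h
    simp only []
    rw [hsum, abs_sub_comm]
    exact (hEf j₀ x (hHE j₀ hj₀)).le

lemma accPts_subset_closure (G : Set (ℝ × ℝ)) : accPts G ⊆ closure G :=
  fun p hp => mem_closure_iff_clusterPt.2 (hp.clusterPt)

lemma isClosed_accPts (G : Set (ℝ × ℝ)) : IsClosed (accPts G) := by
  rw [← isOpen_compl_iff, Metric.isOpen_iff]
  intro p hp
  rw [mem_compl_iff, accPts, mem_setOf_eq, accPt_iff_nhds] at hp
  push_neg at hp
  obtain ⟨U, hU, hUp⟩ := hp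
  obtain ⟨ε, hε, hball⟩ := Metric.mem_nhds_iff.1 hU
  refine ⟨ε, hε, fun q hq => ?_⟩
  rw [mem_compl_iff, accPts, mem_setOf_eq, accPt_iff_nhds]
  push_neg
  by_cases hqp : q = p
  · subst hqp
    exact ⟨U, hU, hUp⟩
  · have hdq : 0 < dist q p := dist_pos.2 hqp
    refine ⟨ball q (min (ε - dist q p) (dist q p)), ball_mem_nhds q ?_, ?_⟩
    · rw [lt_min_iff]
      exact ⟨by rw [mem_ball] at hq; linarith, hdq⟩
    · rintro y ⟨hy1, hy2⟩
      have hyp : y ∈ U := by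
        apply hball
        rw [mem_ball] at hy1 hq ⊢
        have := hy1.trans_le (min_le_left _ _)
        calc dist y p ≤ dist y q + dist q p := dist_triangle _ _ _
        _ < ε := by linarith
      have := hUp y ⟨hyp, hy2⟩
      subst this
      rw [mem_ball] at hy1
      have := hy1.trans_le (min_le_right _ _)
      rw [dist_comm] at this
      exact absurd this (lt_irrefl _)

lemma graphOn_subset {f : ℝ → ℝ} {M : ℝ} (hM : ∀ x ∈ Icc (0:ℝ) 1, |f x| ≤ M) :
    graphOn (Icc 0 1) f ⊆ (Icc (0:ℝ) 1) ×ˢ (Icc (-M) M) := by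
  rintro ⟨x, y⟩ ⟨hx, hy⟩
  simp only [mem_prod]
  refine ⟨hx, ?_⟩
  have := abs_le.1 (hM x hx)
  rw [show y = f x from hy]
  exact ⟨this.1, this.2⟩

lemma forward_compact {f : ℝ → ℝ} {M : ℝ} (hM : ∀ x ∈ Icc (0:ℝ) 1, |f x| ≤ M) :
    IsCompact (accPts (graphOn (Icc 0 1) f)) := by
  apply IsCompact.of_isClosed_subset (isCompact_Icc.prod (isCompact_Icc : IsCompact (Icc (-M) M)))
    (isClosed_accPts _)
  refine (accPts_subset_closure _).trans ?_
  exact closure_minimal (graphOn_subset hM) (isClosed_Icc.prod isClosed_Icc)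

lemma forward_sections {f : ℝ → ℝ} {M : ℝ} (hM : ∀ x ∈ Icc (0:ℝ) 1, |f x| ≤ M)
    {x : ℝ} (hx : x ∈ Icc (0:ℝ) 1) : ∃ y, (x, y) ∈ accPts (graphOn (Icc 0 1) f) := by
  obtain ⟨u, hu, hut⟩ := seq_approach hx (isMeagre_coe_countable countable_empty)
  have hfu : ∀ n, f (u n) ∈ Icc (-M) M := by
    intro n
    have := abs_le.1 (hM _ (hu n).1)
    exact ⟨this.1, this.2⟩
  obtain ⟨y, _, φ, hφ, hconv⟩ := tendsto_subseq_of_bounded (isBounded_Icc (-M) M) hfu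
  refine ⟨y, ?_⟩
  rw [accPts, mem_setOf_eq, accPt_iff_nhds]
  intro U hU
  have hten : Tendsto (fun n => (u (φ n), f (u (φ n)))) atTop (𝓝 (x, y)) :=
    Tendsto.prodMk_nhds ((hut.comp hφ.tendsto_atTop)) hconv
  have hev : ∀ᶠ n in atTop, (u (φ n), f (u (φ n))) ∈ U := hten hU
  obtain ⟨n, hn⟩ := hev.exists
  refine ⟨(u (φ n), f (u (φ n))), ⟨hn, ⟨(hu (φ n)).1, rfl⟩⟩, fun heq => ?_⟩
  exact (hu (φ n)).2.2 (congrArg Prod.fst heq)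

lemma isMeagre_closed_diff_interior {X : Type*} [TopologicalSpace X] {F : Set X}
    (hF : IsClosed F) : IsMeagre (F \ interior F) := by
  rw [isMeagre_iff_countable_union_isNowhereDense]
  refine ⟨{F \ interior F}, ?_, countable_singleton _, by simp⟩
  rintro t ht
  simp only [mem_singleton_iff] at ht
  subst ht
  have hcl : IsClosed (F \ interior F) := hF.inter (isOpen_interior.isClosed_compl)
  rw [hcl.isNowhereDense_iff]
  rw [← subset_empty_iff]
  intro x hxint
  have h1 : x ∈ interior F := interior_mono diff_subset hxint
  exact absurd h1 (interior_subset hxint).2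

lemma meagre_discont {φ : (Icc (0:ℝ) 1) → ℝ} {ψ : ℕ → (Icc (0:ℝ) 1) → ℝ}
    (hc : ∀ n, Continuous (ψ n))
    (ht : ∀ x, Tendsto (fun n => ψ n x) atTop (𝓝 (φ x))) :
    IsMeagre {x | ¬ ContinuousAt φ x} := by
  set F : ℕ → ℕ → Set (Icc (0:ℝ) 1) :=
    fun j N => {x | ∀ m ≥ N, ∀ n ≥ N, dist (ψ m x) (ψ n x) ≤ 1/(j+1)} with hF
  have hFc : ∀ j N, IsClosed (F j N) := by
    intro j N
    have : F j N = ⋂ m, ⋂ (_ : m ≥ N), ⋂ n, ⋂ (_ : n ≥ N),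
        {x | dist (ψ m x) (ψ n x) ≤ 1/(j+1)} := by
      ext x; simp only [mem_iInter, mem_setOf_eq, hF]
    rw [this]
    exact isClosed_iInter fun m => isClosed_iInter fun _ => isClosed_iInter fun n =>
      isClosed_iInter fun _ => isClosed_le ((hc m).dist (hc n)) continuous_const
  have hFcover : ∀ j x, ∃ N, x ∈ F j N := by
    intro j x
    have hpos : (0:ℝ) < 1/(2*(j+1)) := by positivity
    have := (Metric.tendsto_atTop.1 (ht x)) (1/(2*(j+1))) hpos
    obtain ⟨N, hN⟩ := this
    refine ⟨N, fun m hm n hn => ?_⟩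
    calc dist (ψ m x) (ψ n x) ≤ dist (ψ m x) (φ x) + dist (φ x) (ψ n x) := dist_triangle _ _ _
    _ ≤ 1/(2*(j+1)) + 1/(2*(j+1)) := by
        have h1 := (hN m hm).le
        have h2 := (hN n hn).le
        rw [dist_comm (φ x)]
        linarith
    _ = 1/(j+1) := by
        rw [← two_mul]
        have hj1 : ((j:ℝ)+1) ≠ 0 := by positivity
        field_simp
  have hFapprox : ∀ j N x, x ∈ F j N → dist (φ x) (ψ N x) ≤ 1/(j+1) := by
    intro j N x hx
    have htd : Tendsto (fun m => dist (ψ m x) (ψ N x)) atTop (𝓝 (dist (φ x) (ψ N x))) :=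
      (ht x).dist tendsto_const_nhds
    apply le_of_tendsto htd
    filter_upwards [eventually_ge_atTop N] with m hm
    exact hx m hm N le_rfl
  set R : ℕ → Set (Icc (0:ℝ) 1) := fun j => ⋃ N, interior (F j N) with hR
  have hRmeagre : ∀ j, IsMeagre ((R j)ᶜ) := by
    intro j
    have hsub : (R j)ᶜ ⊆ ⋃ N, (F j N \ interior (F j N)) := by
      intro x hx
      obtain ⟨N, hN⟩ := hFcover j x
      refine mem_iUnion.2 ⟨N, hN, fun hint => ?_⟩
      exact hx (mem_iUnion.2 ⟨N, hint⟩)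
    exact (isMeagre_iUnion fun N => isMeagre_closed_diff_interior (hFc j N)).mono hsub
  have hcont : ∀ x, (∀ j, x ∈ R j) → ContinuousAt φ x := by
    intro x hx
    rw [ContinuousAt, Metric.tendsto_nhds]
    intro ε hε
    obtain ⟨j, hj⟩ := exists_nat_one_div_lt (show (0:ℝ) < ε/3 by linarith)
    obtain ⟨N, hN⟩ := mem_iUnion.1 (hx j)
    have hNx : x ∈ F j N := interior_subset hN
    have hev1 : ∀ᶠ y in 𝓝 x, y ∈ F j N :=
      eventually_of_mem (isOpen_interior.mem_nhds hN) (fun y hy => interior_subset hy)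
    have hev2 : ∀ᶠ y in 𝓝 x, dist (ψ N y) (ψ N x) < 1/(j+1) := by
      have := (hc N).continuousAt (x := x)
      rw [ContinuousAt, Metric.tendsto_nhds] at this
      exact this (1/(j+1)) (by positivity)
    filter_upwards [hev1, hev2] with y hy1 hy2
    have e1 : dist (φ y) (ψ N y) ≤ 1/(j+1) := hFapprox j N y hy1
    have e2 : dist (ψ N x) (φ x) ≤ 1/(j+1) := by rw [dist_comm]; exact hFapprox j N x hNx
    calc dist (φ y) (φ x) ≤ dist (φ y) (ψ N y) + dist (ψ N y) (ψ N x) + dist (ψ N x) (φ x) :=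
      dist_triangle4 _ _ _ _
    _ < 1/(j+1) + 1/(j+1) + 1/(j+1) := by linarith
    _ = 3 * (1/(j+1)) := by ring
    _ < ε := by linarith
  have hfinal : {x : Icc (0:ℝ) 1 | ¬ ContinuousAt φ x} ⊆ ⋃ j, (R j)ᶜ := by
    intro x hx
    by_contra h
    simp only [mem_iUnion, mem_compl_iff, not_exists, not_not] at h
    exact hx (hcont x h)
  exact (isMeagre_iUnion hRmeagre).mono hfinal

lemma forward_meagre {f : ℝ → ℝ} (hf : Baire1 f) {T : Set (ℝ × ℝ)}
    (hacc : accPts (graphOn (Icc 0 1) f) = T) :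
    MeagreIn01 {x : ℝ | ∃ y z : ℝ, (x, y) ∈ T ∧ (x, z) ∈ T ∧ y ≠ z} := by
  obtain ⟨g, hgc, hgt⟩ := hf
  set φ : (Icc (0:ℝ) 1) → ℝ := (Icc (0:ℝ) 1).restrict f with hφ
  set ψ : ℕ → (Icc (0:ℝ) 1) → ℝ := fun n => (Icc (0:ℝ) 1).restrict (g n) with hψ
  have hm : IsMeagre {x | ¬ ContinuousAt φ x} :=
    meagre_discont (fun n => (hgc n).restrict) (fun x => hgt x.1 x.2)
  apply hm.mono
  rintro x hx
  simp only [mem_preimage, mem_setOf_eq] at hx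
  obtain ⟨y, z, hy, hz, hyz⟩ := hx
  simp only [mem_setOf_eq]
  intro hcont
  -- any accumulation value above x equals φ x
  have key : ∀ w : ℝ, ((x : ℝ), w) ∈ T → w = φ x := by
    intro w hw
    rw [← hacc] at hw
    have hseq : ∀ n : ℕ, ∃ p : ℝ × ℝ, p ∈ graphOn (Icc 0 1) f ∧
        dist p ((x:ℝ), w) < 1/(n+1) ∧ p ≠ ((x:ℝ), w) := by
      intro n
      have := (accPt_iff_nhds).1 hw (ball ((x:ℝ), w) (1/(n+1)))
        (ball_mem_nhds _ (by positivity))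
      obtain ⟨p, ⟨hp1, hp2⟩, hp3⟩ := this
      exact ⟨p, hp2, by rwa [mem_ball] at hp1, hp3⟩
    choose p hpG hpd _ using hseq
    have hfst : Tendsto (fun n => (p n).1) atTop (𝓝 (x:ℝ)) := by
      rw [tendsto_iff_dist_tendsto_zero]
      apply squeeze_zero (fun n => dist_nonneg) (fun n => ?_)
        tendsto_one_div_add_atTop_nhds_zero_nat
      calc dist (p n).1 (x:ℝ) ≤ dist (p n) ((x:ℝ), w) := by
            rw [Prod.dist_eq]; exact le_max_left _ _
      _ ≤ 1/(n+1) := (hpd n).le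
    have hsnd : Tendsto (fun n => (p n).2) atTop (𝓝 w) := by
      rw [tendsto_iff_dist_tendsto_zero]
      apply squeeze_zero (fun n => dist_nonneg) (fun n => ?_)
        tendsto_one_div_add_atTop_nhds_zero_nat
      calc dist (p n).2 w ≤ dist (p n) ((x:ℝ), w) := by
            rw [Prod.dist_eq]; exact le_max_right _ _
      _ ≤ 1/(n+1) := (hpd n).le
    set u : ℕ → Icc (0:ℝ) 1 := fun n => ⟨(p n).1, (hpG n).1⟩ with hu
    have huten : Tendsto u atTop (𝓝 x) := by
      rw [Topology.IsEmbedding.subtypeVal.tendsto_nhds_iff]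
      exact hfst
    have h1 : Tendsto (fun n => φ (u n)) atTop (𝓝 (φ x)) := (hcont.tendsto).comp huten
    have h2 : Tendsto (fun n => φ (u n)) atTop (𝓝 w) := by
      have : ∀ n, φ (u n) = (p n).2 := fun n => ((hpG n).2).symm
      simp_rw [this]
      exact hsnd
    exact tendsto_nhds_unique h2 h1
  exact hyz ((key y hy).trans (key z hz).symm)

lemma isMeagre_union' {s t : Set (Icc (0:ℝ) 1)} (hs : IsMeagre s) (ht : IsMeagre t) :
    IsMeagre (s ∪ t) := by
  have : s ∪ t = ⋃ n : ℕ, (if n = 0 then s else t) := by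
    ext x
    simp only [mem_union, mem_iUnion]
    constructor
    · rintro (h | h)
      exacts [⟨0, by simpa using h⟩, ⟨1, by simpa using h⟩]
    · rintro ⟨n, h⟩
      by_cases hn : n = 0
      · left; simpa [hn] using h
      · right; simpa [hn] using h
  rw [this]
  exact isMeagre_iUnion fun n => by by_cases hn : n = 0 <;> simp [hn, hs, ht]

lemma backward_direction {T : Set (ℝ × ℝ)} (hT : ∀ p ∈ T, p.1 ∈ Icc (0:ℝ) 1)
    (hcomp : IsCompact T) (hsec : ∀ x ∈ Icc (0:ℝ) 1, ∃ y, (x, y) ∈ T)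
    (hmeag : MeagreIn01 {x : ℝ | ∃ y z : ℝ, (x, y) ∈ T ∧ (x, z) ∈ T ∧ y ≠ z}) :
    ∃ f : ℝ → ℝ, Baire1 f ∧ (∃ M, ∀ x ∈ Icc (0:ℝ) 1, |f x| ≤ M) ∧
      accPts (graphOn (Icc 0 1) f) = T := by
  classical
  set D : Set ℝ := {x : ℝ | ∃ y z : ℝ, (x, y) ∈ T ∧ (x, z) ∈ T ∧ y ≠ z} with hD
  have hTclosed : IsClosed T := hcomp.isClosed
  -- a bound for T
  obtain ⟨R, hR⟩ := hcomp.isBounded.subset_closedBall 0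
  set M : ℝ := max R 0 with hM
  have hbT : ∀ p ∈ T, |p.2| ≤ M := by
    intro p hp
    have := hR hp
    rw [Metric.mem_closedBall, Prod.dist_eq] at this
    have h2 : dist p.2 (0:ℝ) ≤ R := le_trans (le_max_right _ _) this
    rw [Real.dist_eq, sub_zero] at h2
    exact h2.trans (le_max_left _ _)
  -- sections and the minimum function
  set Sec : ℝ → Set ℝ := fun x => {y | (x, y) ∈ T} with hSec
  have hSecClosed : ∀ x, IsClosed (Sec x) :=
    fun x => hTclosed.preimage (Continuous.prodMk_right x)
  have hSecBdd : ∀ x, BddBelow (Sec x) :=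
    fun x => ⟨-M, fun y hy => (abs_le.1 (hbT (x, y) hy)).1⟩
  set m : ℝ → ℝ := fun x => sInf (Sec x) with hm
  have hmmem : ∀ x ∈ Icc (0:ℝ) 1, (x, m x) ∈ T := by
    intro x hx
    obtain ⟨y, hy⟩ := hsec x hx
    exact (hSecClosed x).csInf_mem ⟨y, hy⟩ (hSecBdd x)
  have hmb : ∀ x ∈ Icc (0:ℝ) 1, |m x| ≤ M := fun x hx => hbT _ (hmmem x hx)
  have hmle : ∀ x y, (x, y) ∈ T → m x ≤ y := fun x y hy => csInf_le (hSecBdd x) hy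
  have hDm : ∀ x, x ∈ Icc (0:ℝ) 1 → x ∉ D → ∀ y, (x, y) ∈ T → y = m x := by
    intro x hx hxD y hy
    by_contra hne
    exact hxD ⟨y, m x, hy, hmmem x hx, hne⟩
  -- sublevel projections
  set K : ℝ → Set ℝ := fun c => Prod.fst '' (T ∩ (univ ×ˢ Iic c)) with hK
  have hKcomp : ∀ c, IsCompact (K c) :=
    fun c => ((hcomp.inter_right (isClosed_univ.prod isClosed_Iic)).image continuous_fst)
  have hKmem : ∀ c x, x ∈ K c ↔ ∃ y, (x, y) ∈ T ∧ y ≤ c := by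
    intro c x
    constructor
    · rintro ⟨p, ⟨hpT, -, hpy⟩, rfl⟩
      exact ⟨p.2, hpT, hpy⟩
    · rintro ⟨y, hyT, hyc⟩
      exact ⟨(x, y), ⟨hyT, trivial, hyc⟩, rfl⟩
  -- Fσ preimages for m
  have hmpre' : ∀ p q : ℝ, IsFsig (m ⁻¹' (Ioo p q) ∩ Icc 0 1) := by
    intro p q
    have heq : m ⁻¹' (Ioo p q) ∩ Icc 0 1 = ⋃ n : ℕ, (K (q - 1/(n+1)) \ K p) := by
      ext x
      simp only [mem_inter_iff, mem_preimage, mem_Ioo, mem_iUnion, mem_diff]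
      constructor
      · rintro ⟨⟨hp, hq⟩, hI⟩
        obtain ⟨n, hn⟩ := exists_nat_one_div_lt (show (0:ℝ) < q - m x by linarith)
        refine ⟨n, (hKmem _ x).2 ⟨m x, hmmem x hI, by linarith⟩, fun hxK => ?_⟩
        obtain ⟨y, hyT, hyp⟩ := (hKmem p x).1 hxK
        exact absurd (hmle x y hyT) (by linarith)
      · rintro ⟨n, hx1, hx2⟩
        obtain ⟨y, hyT, hyq⟩ := (hKmem _ x).1 hx1
        have hxI : x ∈ Icc (0:ℝ) 1 := hT (x, y) hyT
        have h1 : m x ≤ q - 1/(n+1) := le_trans (hmle x y hyT) hyq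
        have h2 : p < m x := by
          by_contra hle
          push_neg at hle
          exact hx2 ((hKmem p x).2 ⟨m x, hmmem x hxI, hle⟩)
        have h3 : (0:ℝ) < 1/(n+1) := by positivity
        exact ⟨⟨h2, by linarith⟩, hxI⟩
    rw [heq]
    exact isFsig_iUnion fun n =>
      ((hKcomp _).isClosed.isFsig).diff_closed (hKcomp p).isClosed
  have hmpre : ∀ p q : ℝ, ∃ C : ℕ → Set ℝ, (∀ i, IsClosed (C i)) ∧
      (∀ i, C i ⊆ m ⁻¹' (Ioo p q) ∩ Icc 0 1) ∧
      m ⁻¹' (Ioo p q) ∩ Icc 0 1 = ⋃ i, C i := by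
    intro p q
    obtain ⟨C, h1, h2⟩ := hmpre' p q
    exact ⟨C, h1, fun i => h2 ▸ subset_iUnion C i, h2⟩
  -- countable dense subset of T over D, plus a base point
  obtain ⟨y₀, ht₀⟩ := hsec 0 (by norm_num)
  set Y : Set (ℝ × ℝ) := (T ∩ (D ×ˢ univ)) ∪ {(0, y₀)} with hY
  have hYT : Y ⊆ T := by
    rintro p (hp | hp)
    · exact hp.1
    · simp only [mem_singleton_iff] at hp; subst hp; exact ht₀
  have hYne : Y.Nonempty := ⟨(0, y₀), Or.inr rfl⟩
  obtain ⟨e, heY, hedense⟩ : ∃ e : ℕ → ℝ × ℝ, (∀ k, e k ∈ Y) ∧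
      ∀ p ∈ Y, ∀ ε > 0, ∃ k, dist (e k) p < ε := by
    haveI : Nonempty Y := hYne.to_subtype
    obtain ⟨s, hscount, hsdense⟩ := TopologicalSpace.exists_countable_dense Y
    obtain ⟨es, hes⟩ := hscount.exists_eq_range hsdense.nonempty
    refine ⟨fun k => (es k : ℝ × ℝ), fun k => (es k).2, ?_⟩
    intro pp hp ε hε
    have hcl : (⟨pp, hp⟩ : Y) ∈ closure s := hsdense _
    rw [Metric.mem_closure_iff] at hcl
    obtain ⟨qq, hq, hdq⟩ := hcl ε hε
    rw [hes] at hq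
    obtain ⟨k, rfl⟩ := hq
    refine ⟨k, ?_⟩
    rw [Subtype.dist_eq, dist_comm] at hdq
    exact hdq
  set a : ℕ → ℝ := fun k => (e k).1 with ha
  set b : ℕ → ℝ := fun k => (e k).2 with hb
  have haIcc : ∀ k, a k ∈ Icc (0:ℝ) 1 := fun k => hT _ (hYT (heY k))
  have heT : ∀ k, (a k, b k) ∈ T := fun k => hYT (heY k)
  -- the perturbation points, chosen recursively
  set dec : ℕ → ℕ × ℕ := fun N => (Denumerable.eqv (ℕ × ℕ)).symm N with hdec
  have EX : ∀ (N : ℕ) (prev : ℕ → ℝ), ∃ x : ℝ, x ∈ Icc (0:ℝ) 1 ∧ x ∉ D ∧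
      (∀ N' < N, x ≠ prev N') ∧ x ≠ a (dec N).1 ∧
      |x - a (dec N).1| < (1/2)^N ∧ |x - a (dec N).1| < 1/((dec N).2+1) := by
    intro N prev
    set C : Set ℝ := D ∪ (prev '' Iio N) with hC
    have hCme : IsMeagre ((↑) ⁻¹' C : Set (Icc (0:ℝ) 1)) := by
      rw [hC, preimage_union]
      exact isMeagre_union' hmeag (isMeagre_coe_countable
        (((Set.finite_Iio N).image prev).countable))
    have hεpos : (0:ℝ) < min (((1:ℝ)/2)^N) (1/(((dec N).2:ℝ)+1)) :=
      lt_min (by positivity) (by positivity)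
    obtain ⟨x, hxI, hxC, hxa, hxd⟩ := pick_point (haIcc (dec N).1) hεpos hCme
    refine ⟨x, hxI, fun hd => hxC (Or.inl hd), fun N' hN' hEq => ?_, hxa,
      lt_of_lt_of_le hxd (min_le_left _ _), lt_of_lt_of_le hxd (min_le_right _ _)⟩
    exact hxC (Or.inr ⟨N', hN', hEq.symm⟩)
  choose pick hpick1 hpick2 hpick3 hpick4 hpick5 hpick6 using EX
  set g : ℕ → ℕ → ℝ := fun N =>
    Nat.rec (motive := fun _ => ℕ → ℝ) (fun _ => 0)
      (fun N gN => Function.update gN N (pick N gN)) N with hg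
  set pts : ℕ → ℝ := fun N => g (N+1) N with hpts
  have hgsucc : ∀ N, g (N+1) = Function.update (g N) N (pick N (g N)) := fun N => rfl
  have hptseq : ∀ N, pts N = pick N (g N) := by
    intro N
    rw [hpts]; simp only [hgsucc, Function.update_self]
  have hgext : ∀ N N', N' < N → g N N' = pts N' := by
    intro N
    induction N with
    | zero => omega
    | succ N ih =>
      intro N' hN'
      rcases Nat.lt_succ_iff_lt_or_eq.1 hN' with h | h
      · rw [hgsucc, Function.update_of_ne (by omega)]
        exact ih N' h
      · subst h
        rw [hgsucc, Function.update_self, hptseq]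
  -- basic properties of pts
  have hptsIcc : ∀ N, pts N ∈ Icc (0:ℝ) 1 := fun N => hptseq N ▸ hpick1 N (g N)
  have hptsD : ∀ N, pts N ∉ D := fun N => hptseq N ▸ hpick2 N (g N)
  have hptsInj : Function.Injective pts := by
    intro N N' hNN'
    by_contra hne
    rcases Ne.lt_or_gt hne with h | h
    · have h3 := hpick3 N' (g N') N h
      rw [hgext N' N h, ← hptseq N'] at h3
      exact h3 hNN'.symm
    · have h3 := hpick3 N (g N) N' h
      rw [hgext N N' h, ← hptseq N] at h3
      exact h3 hNN'
  have hptsa : ∀ N, pts N ≠ a (dec N).1 := fun N => hptseq N ▸ hpick4 N (g N)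
  have hptsclose : ∀ N, |pts N - a (dec N).1| < (1/2)^N := fun N => hptseq N ▸ hpick5 N (g N)
  have hptsclose2 : ∀ N, |pts N - a (dec N).1| < 1/((dec N).2+1) :=
    fun N => hptseq N ▸ hpick6 N (g N)
  -- the function f
  set S : Set ℝ := range pts with hS
  set f : ℝ → ℝ := fun x => if h : ∃ N, pts N = x then b (dec (Nat.find h)).1 else m x with hf
  have hfS : ∀ N, f (pts N) = b (dec N).1 := by
    intro N
    have hex : ∃ N', pts N' = pts N := ⟨N, rfl⟩
    simp only [hf]
    rw [dif_pos hex]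
    have := Nat.find_spec hex
    rw [hptsInj this]
  have hfm : ∀ x, x ∉ S → f x = m x := by
    intro x hx
    simp only [hf]
    rw [dif_neg]
    rintro ⟨N, rfl⟩
    exact hx (mem_range_self N)
  have hbound : ∀ x ∈ Icc (0:ℝ) 1, |f x| ≤ M := by
    intro x hx
    by_cases hxS : x ∈ S
    · obtain ⟨N, rfl⟩ := hxS
      rw [hfS N]
      exact hbT _ (heT (dec N).1)
    · rw [hfm x hxS]; exact hmb x hx
  -- the graph
  have hgraphm : ∀ x ∈ Icc (0:ℝ) 1, x ∉ S → (x, f x) ∈ T := by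
    intro x hx hxS
    rw [hfm x hxS]
    exact hmmem x hx
  -- accumulation points are in T
  have hsub : accPts (graphOn (Icc 0 1) f) ⊆ T := by
    intro pp hpp
    by_contra hpT
    have hδex : ∃ δ > 0, ∀ q ∈ T, δ ≤ dist pp q := by
      obtain ⟨δ, hδ, hball⟩ := Metric.isOpen_iff.1 hTclosed.isOpen_compl pp hpT
      refine ⟨δ, hδ, fun q hq => ?_⟩
      by_contra hlt
      push_neg at hlt
      exact (hball (by rwa [mem_ball, dist_comm])) hq
    obtain ⟨δ, hδpos, hδ⟩ := hδex
    obtain ⟨N₀, hN₀⟩ := exists_pow_lt_of_lt_one (show (0:ℝ) < δ/2 by linarith)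
      (show (1:ℝ)/2 < 1 by norm_num)
    have hpow : ∀ N, N₀ ≤ N → ((1:ℝ)/2)^N < δ/2 := fun N hN =>
      lt_of_le_of_lt (pow_le_pow_of_le_one (by norm_num) (by norm_num) hN) hN₀
    set Q : Finset ℝ := insert (δ/2)
      (((Finset.range N₀).image (fun N => dist pp (pts N, f (pts N)))).filter
        (fun r => 0 < r)) with hQdef
    have hQne : Q.Nonempty := ⟨δ/2, Finset.mem_insert_self _ _⟩
    set r : ℝ := Q.min' hQne with hrdef
    have hrpos : 0 < r := by
      rw [hrdef, Finset.lt_min'_iff]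
      intro y hy
      rcases Finset.mem_insert.1 hy with rfl | hy
      · linarith
      · exact (Finset.mem_filter.1 hy).2
    have hrδ : r ≤ δ/2 := Finset.min'_le _ _ (Finset.mem_insert_self _ _)
    obtain ⟨q, ⟨hqball, hq1, hq2⟩, hqne⟩ :=
      (accPt_iff_nhds).1 hpp (ball pp r) (ball_mem_nhds _ hrpos)
    rw [mem_ball, dist_comm] at hqball
    by_cases hqS : q.1 ∈ S
    · obtain ⟨N, hN⟩ := hqS
      have hqeq : q = (pts N, f (pts N)) := by
        have h1 : q.1 = pts N := hN.symm
        have h2 : q.2 = f (pts N) := by rw [hq2, h1]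
        exact Prod.ext h1 h2
      by_cases hNN₀ : N₀ ≤ N
      · have hclose : dist q (a (dec N).1, b (dec N).1) < (1/2)^N := by
          rw [hqeq, Prod.dist_eq, hfS N, dist_self]
          rw [max_eq_left dist_nonneg, Real.dist_eq]
          exact hptsclose N
        have h3 := hδ _ (heT (dec N).1)
        have h4 := dist_triangle pp q (a (dec N).1, b (dec N).1)
        have h5 := hpow N hNN₀
        linarith
      · have hdist0 : 0 < dist pp q := dist_pos.2 (Ne.symm hqne)
        have hmemQ : dist pp q ∈ Q := by
          apply Finset.mem_insert_of_mem
          apply Finset.mem_filter.2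
          refine ⟨Finset.mem_image.2 ⟨N, Finset.mem_range.2 (by omega), ?_⟩, hdist0⟩
          rw [hqeq]
        exact absurd (Finset.min'_le _ _ hmemQ) (not_le.2 hqball)
    · have hqT : q ∈ T := by
        have h := hgraphm q.1 hq1 hqS
        rwa [← hq2] at h
      linarith [hδ q hqT]
  -- T is contained in the accumulation points
  have hsup : T ⊆ accPts (graphOn (Icc 0 1) f) := by
    rintro ⟨x₀, w₀⟩ hxy
    rw [accPts, mem_setOf_eq, accPt_iff_nhds]
    intro U hU
    obtain ⟨ε, hε, hball⟩ := Metric.mem_nhds_iff.1 hU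
    by_cases hx₀D : x₀ ∈ D
    · have hmemY : (x₀, w₀) ∈ Y := Or.inl ⟨hxy, hx₀D, trivial⟩
      obtain ⟨k, hk⟩ := hedense _ hmemY (ε/2) (by linarith)
      obtain ⟨j, hj⟩ := exists_nat_one_div_lt (show (0:ℝ) < ε/2 by linarith)
      set N := (Denumerable.eqv (ℕ × ℕ)) (k, j) with hNdef
      have hdecN : dec N = (k, j) := by
        rw [hdec]
        simp only [hNdef]
        exact Equiv.symm_apply_apply _ _
      have hfq : f (pts N) = b k := by rw [hfS N, hdecN]
      refine ⟨(pts N, f (pts N)), ⟨?_, ⟨hptsIcc N, rfl⟩⟩, ?_⟩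
      · apply hball
        rw [mem_ball]
        have heab : (a k, b k) = e k := rfl
        have hd1 : dist (pts N, f (pts N)) (e k) = |pts N - a k| := by
          rw [← heab, Prod.dist_eq, hfq, dist_self, max_eq_left dist_nonneg, Real.dist_eq]
        have hd2 : |pts N - a k| < ε/2 := by
          have h := hptsclose2 N
          rw [hdecN] at h
          calc |pts N - a k| < 1/((j:ℝ)+1) := h
          _ < ε/2 := hj
        calc dist (pts N, f (pts N)) (x₀, w₀)
            ≤ dist (pts N, f (pts N)) (e k) + dist (e k) (x₀, w₀) := dist_triangle _ _ _
        _ < ε/2 + ε/2 := by rw [hd1]; exact add_lt_add hd2 hk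
        _ = ε := by ring
      · intro hEq
        apply hptsD N
        rw [show pts N = x₀ from congrArg Prod.fst hEq]
        exact hx₀D
    · have hx₀I : x₀ ∈ Icc (0:ℝ) 1 := hT _ hxy
      have hy₀m : w₀ = m x₀ := hDm x₀ hx₀I hx₀D _ hxy
      obtain ⟨u, hu, hut⟩ := seq_approach hx₀I (isMeagre_coe_countable (countable_range pts))
      have hfu : ∀ n, f (u n) = m (u n) := fun n => hfm _ (fun hS' => (hu n).2.1 hS')
      have hmlim : Tendsto (fun n => m (u n)) atTop (𝓝 w₀) := by
        apply tendsto_of_subseq_tendsto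
        intro ns hns
        have hbnd : ∀ i, m (u (ns i)) ∈ Icc (-M) M := by
          intro i
          have := abs_le.1 (hmb _ (hu (ns i)).1)
          exact ⟨this.1, this.2⟩
        obtain ⟨c, -, ms, hms, hconv⟩ := tendsto_subseq_of_bounded (isBounded_Icc (-M) M) hbnd
        refine ⟨ms, ?_⟩
        have hTlim : (x₀, c) ∈ T := by
          have hmemT : ∀ i, (u (ns (ms i)), m (u (ns (ms i)))) ∈ T :=
            fun i => hmmem _ (hu _).1
          have htt : Tendsto (fun i => (u (ns (ms i)), m (u (ns (ms i))))) atTop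
              (𝓝 (x₀, c)) :=
            Tendsto.prodMk_nhds (hut.comp (hns.comp hms.tendsto_atTop)) hconv
          exact hTclosed.mem_of_tendsto htt (Eventually.of_forall hmemT)
        have hc : c = m x₀ := hDm x₀ hx₀I hx₀D c hTlim
        rw [hy₀m, ← hc]
        exact hconv
      have hten : Tendsto (fun n => (u n, f (u n))) atTop (𝓝 (x₀, w₀)) := by
        apply Tendsto.prodMk_nhds hut
        have hfeq : (fun n => f (u n)) = (fun n => m (u n)) := funext hfu
        rw [hfeq]
        exact hmlim
      have hev : ∀ᶠ n in atTop, (u n, f (u n)) ∈ U := hten hU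
      obtain ⟨n, hn⟩ := hev.exists
      exact ⟨(u n, f (u n)), ⟨hn, ⟨(hu n).1, rfl⟩⟩,
        fun hEq => (hu n).2.2 (congrArg Prod.fst hEq)⟩
  -- f has Fσ preimages
  have hpre : ∀ p q : ℝ, IsFsig (f ⁻¹' (Ioo p q) ∩ Icc 0 1) := by
    intro p q
    set U : Set ℝ := Ioo p q with hUdef
    set B : Set ℝ := {x | ∃ N, pts N = x ∧ b (dec N).1 ∉ U} with hB
    set SU : Set ℝ := {x | ∃ N, pts N = x ∧ b (dec N).1 ∈ U} with hSUdef
    have hSUc : SU.Countable := by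
      apply (countable_range pts).mono
      rintro x ⟨N, h1, -⟩
      exact ⟨N, h1⟩
    have hmain : f ⁻¹' U ∩ Icc 0 1 = ((m ⁻¹' U ∩ Icc 0 1) \ B) ∪ SU := by
      ext x
      constructor
      · rintro ⟨hxU, hxI⟩
        by_cases hxS : x ∈ S
        · obtain ⟨N, rfl⟩ := hxS
          right
          refine ⟨N, rfl, ?_⟩
          rw [mem_preimage, hfS N] at hxU
          exact hxU
        · left
          rw [mem_preimage, hfm x hxS] at hxU
          refine ⟨⟨hxU, hxI⟩, ?_⟩
          rintro ⟨N, rfl, -⟩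
          exact hxS (mem_range_self N)
      · rintro (⟨⟨hxU, hxI⟩, hxB⟩ | hxSU)
        · by_cases hxS : x ∈ S
          · obtain ⟨N, rfl⟩ := hxS
            have hbU : b (dec N).1 ∈ U := by
              by_contra hbU
              exact hxB ⟨N, rfl, hbU⟩
            exact ⟨by rw [mem_preimage, hfS N]; exact hbU, hxI⟩
          · exact ⟨by rw [mem_preimage, hfm x hxS]; exact hxU, hxI⟩
        · obtain ⟨N, rfl, hbU⟩ := hxSU
          exact ⟨by rw [mem_preimage, hfS N]; exact hbU, hptsIcc N⟩
    set A : Set ℝ := Prod.fst '' (T ∩ (univ ×ˢ Uᶜ)) with hAdef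
    have hAclosed : IsClosed A :=
      ((hcomp.inter_right (isClosed_univ.prod isOpen_Ioo.isClosed_compl)).image
        continuous_fst).isClosed
    have haA : ∀ k', b k' ∉ U → a k' ∈ A :=
      fun k' h => ⟨(a k', b k'), ⟨heT k', trivial, h⟩, rfl⟩
    have hclB : closure B \ B ⊆ A := by
      rintro x ⟨hxcl, hxB⟩
      rw [← hAclosed.closure_eq]
      rw [Metric.mem_closure_iff]
      intro ε hε
      obtain ⟨N₀, hN₀⟩ := exists_pow_lt_of_lt_one (show (0:ℝ) < ε/2 by linarith)
        (show (1:ℝ)/2 < 1 by norm_num)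
      have hpow : ∀ N, N₀ ≤ N → ((1:ℝ)/2)^N < ε/2 := fun N hN =>
        lt_of_le_of_lt (pow_le_pow_of_le_one (by norm_num) (by norm_num) hN) hN₀
      set Q : Finset ℝ := insert (ε/2)
        (((Finset.range N₀).image (fun N => |pts N - x|)).filter (fun t => 0 < t)) with hQdef
      have hQne : Q.Nonempty := ⟨ε/2, Finset.mem_insert_self _ _⟩
      set r : ℝ := Q.min' hQne with hrdef
      have hrpos : 0 < r := by
        rw [hrdef, Finset.lt_min'_iff]
        intro y hy
        rcases Finset.mem_insert.1 hy with rfl | hy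
        · linarith
        · exact (Finset.mem_filter.1 hy).2
      have hrε : r ≤ ε/2 := Finset.min'_le _ _ (Finset.mem_insert_self _ _)
      rw [Metric.mem_closure_iff] at hxcl
      obtain ⟨y, hyB, hdxy⟩ := hxcl r hrpos
      obtain ⟨N, hNy, hbN⟩ := hyB
      rw [← hNy] at hdxy
      have hNx : pts N ≠ x := by
        intro hEq
        exact hxB ⟨N, hEq, hbN⟩
      have hNge : N₀ ≤ N := by
        by_contra hlt
        push_neg at hlt
        have h0 : 0 < |pts N - x| := by
          rw [abs_pos, sub_ne_zero]
          exact hNx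
        have hmemQ : |pts N - x| ∈ Q :=
          Finset.mem_insert_of_mem (Finset.mem_filter.2
            ⟨Finset.mem_image.2 ⟨N, Finset.mem_range.2 hlt, rfl⟩, h0⟩)
        have hge := Finset.min'_le _ _ hmemQ
        rw [Real.dist_eq, abs_sub_comm] at hdxy
        linarith
      refine ⟨a (dec N).1, haA _ hbN, ?_⟩
      have h1 := hptsclose N
      have h2 := hpow N hNge
      calc dist x (a (dec N).1) ≤ dist x (pts N) + dist (pts N) (a (dec N).1) :=
        dist_triangle _ _ _
      _ < r + (1/2)^N := by
          apply add_lt_add hdxy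
          rw [Real.dist_eq]
          exact h1
      _ < ε/2 + ε/2 := by
          apply add_lt_add_of_le_of_lt hrε
          exact h2
      _ = ε := by ring
    have hBA : ∀ x, x ∈ B → x ∈ A → x ∈ m ⁻¹' U → x ∈ Icc (0:ℝ) 1 → False := by
      intro x hxB hxA hxm hxI
      obtain ⟨N, hNx, -⟩ := hxB
      subst hNx
      obtain ⟨pz, hzmem, hz1⟩ := hxA
      have hzT : pz ∈ T := hzmem.1
      have hzU : pz.2 ∉ U := hzmem.2.2
      apply hptsD N
      refine ⟨pz.2, m (pts N), ?_, hmmem _ hxI, ?_⟩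
      · rw [← hz1]
        exact hzT
      · intro hEq
        rw [hEq] at hzU
        exact hzU hxm
    obtain ⟨C, hCc, hCsub, hCeq⟩ := hmpre p q
    have hpiece : ∀ i, IsFsig (C i \ B) := by
      intro i
      have heq2 : C i \ B = (C i ∩ (closure B)ᶜ) ∪ (C i ∩ closure B ∩ A) := by
        ext x
        constructor
        · rintro ⟨hxC, hxB⟩
          by_cases hxcl : x ∈ closure B
          · exact Or.inr ⟨⟨hxC, hxcl⟩, hclB ⟨hxcl, hxB⟩⟩
          · exact Or.inl ⟨hxC, hxcl⟩
        · rintro (⟨hxC, hxcl⟩ | ⟨⟨hxC, hxcl⟩, hxA⟩)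
          · exact ⟨hxC, fun hxB => hxcl (subset_closure hxB)⟩
          · refine ⟨hxC, fun hxB => ?_⟩
            have hsub' := hCsub i hxC
            exact hBA x hxB hxA hsub'.1 hsub'.2
      rw [heq2]
      exact ((hCc i).isFsig.inter isClosed_closure.isOpen_compl.isFsig).union
        (((hCc i).inter isClosed_closure).inter hAclosed).isFsig
    have hdiffeq : (m ⁻¹' U ∩ Icc 0 1) \ B = ⋃ i, (C i \ B) := by
      rw [hCeq, iUnion_diff]
    rw [hmain, hdiffeq]
    exact (isFsig_iUnion hpiece).union hSUc.isFsig
  exact ⟨f, baire1_of_fsig_preimages hbound hpre, ⟨M, hbound⟩, Subset.antisymm hsub hsup⟩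

theorem stmt14 (T : Set (ℝ × ℝ)) (hT : ∀ p ∈ T, p.1 ∈ Icc (0:ℝ) 1) :
    (∃ f : ℝ → ℝ, Baire1 f ∧ (∃ M, ∀ x ∈ Icc (0:ℝ) 1, |f x| ≤ M) ∧
        accPts (graphOn (Icc 0 1) f) = T) ↔
      (IsCompact T ∧ (∀ x ∈ Icc (0:ℝ) 1, ∃ y, (x, y) ∈ T) ∧
        MeagreIn01 {x : ℝ | ∃ y z : ℝ, (x, y) ∈ T ∧ (x, z) ∈ T ∧ y ≠ z}) := by
  constructor
  · rintro ⟨f, hB1, ⟨M, hM⟩, hacc⟩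
    refine ⟨hacc ▸ forward_compact hM, fun x hx => ?_, forward_meagre hB1 hacc⟩
    obtain ⟨y, hy⟩ := forward_sections hM hx
    exact ⟨y, hacc ▸ hy⟩
  · rintro ⟨h1, h2, h3⟩
    exact backward_direction hT h1 h2 h3
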